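/- Let S = {x_1, ..., x_n} (with x_1 < ... < x_n) be a gcd-closed set of distinct positive integers with max_{x∈S} |G_S(x)| = 2, and let a ≥ 1. Then α_{a,1} = x_1^a, and for 2 ≤ m ≤ n: if G_S(x_m) = {x_{m_0}} then α_{a,m} = x_m^a - x_{m_0}^a; if G_S(x_m) = {x_{m_1}, x_{m_2}} with x_{m_3} = gcd(x_{m_1}, x_{m_2}), then α_{a,m} = x_m^a - x_{m_1}^a - x_{m_2}^a + x_{m_3}^a. -/

import Mathlib

open ArithmeticFunction
open scoped ArithmeticFunction.Moebius

/-- The set of greatest-type divisors of `x` in `S`. -/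
def GTD (S : Finset ℕ) (x : ℕ) : Finset ℕ :=
  S.filter (fun d => d < x ∧ d ∣ x ∧ ∀ y ∈ S, d ∣ y → y ∣ x → y = d ∨ y = x)

/-- Abbreviation for the convolution `(ξ_a * μ)(d)`. -/
def Fconv (a d : ℕ) : ℤ := ∑ e ∈ d.divisors, (e : ℤ) ^ a * (μ (d / e))

lemma moebius_sum (a : ℕ) : ∀ N : ℕ, 0 < N →
    ∑ d ∈ N.divisors, Fconv a d = (N : ℤ) ^ a := by
  have := (ArithmeticFunction.sum_eq_iff_sum_smul_moebius_eq
    (f := fun d => Fconv a d) (g := fun N => (N : ℤ) ^ a)).2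
  refine fun N hN => this ?_ N hN
  intro n hn
  rw [Nat.sum_divisorsAntidiagonal' (f := fun c e => (μ c : ℤ) • ((e : ℤ) ^ a))]
  simp only [zsmul_eq_mul, Fconv]
  exact Finset.sum_congr rfl fun i _ => mul_comm _ _

/-- Every proper divisor of `X` belonging to `S` divides some greatest-type divisor. -/
lemma exists_gtd (S : Finset ℕ) (X z : ℕ) (hz : z ∈ S) (hdvd : z ∣ X) (hlt : z < X) :
    ∃ y ∈ GTD S X, z ∣ y := by
  have hX : 0 < X := lt_of_le_of_lt (Nat.zero_le z) hlt
  have hne : (S.filter (fun w => z ∣ w ∧ w ∣ X ∧ w ≠ X)).Nonempty :=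
    ⟨z, by simp [hz, hdvd, Nat.ne_of_lt hlt]⟩
  set T := S.filter (fun w => z ∣ w ∧ w ∣ X ∧ w ≠ X) with hT
  obtain ⟨hyS, hzy, hyX, hyne⟩ := Finset.mem_filter.1 (T.max'_mem hne)
  refine ⟨T.max' hne, ?_, hzy⟩
  rw [GTD, Finset.mem_filter]
  refine ⟨hyS, lt_of_le_of_ne (Nat.le_of_dvd hX hyX) hyne, hyX, ?_⟩
  intro w hwS hyw hwX
  by_cases hwXe : w = X
  · exact Or.inr hwXe
  · refine Or.inl (le_antisymm ?_ ?_)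
    · exact T.le_max' w (Finset.mem_filter.2 ⟨hwS, hzy.trans hyw, hwX, hwXe⟩)
    · refine Nat.le_of_dvd (Nat.pos_of_ne_zero fun h => ?_) hyw
      rw [h] at hwX
      exact hX.ne' (Nat.eq_zero_of_zero_dvd hwX)

theorem stmt_6 (n : ℕ) (hn : 0 < n) (a : ℕ) (ha : 0 < a)
    (x : Fin n → ℕ) (hmono : StrictMono x) (hpos : ∀ i, 0 < x i)
    (S : Finset ℕ) (hS : S = Finset.image x Finset.univ)
    (hgcd : ∀ s ∈ S, ∀ t ∈ S, Nat.gcd s t ∈ S)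
    (hmax : S.sup (fun s => (GTD S s).card) = 2)
    (α : Fin n → ℤ)
    (hα : ∀ k, α k =
      ∑ d ∈ (x k).divisors.filter (fun d => ∀ t, x t < x k → ¬ d ∣ x t),
        ∑ e ∈ d.divisors, (e : ℤ) ^ a * (μ (d / e))) :
    α ⟨0, hn⟩ = (x ⟨0, hn⟩ : ℤ) ^ a ∧
    (∀ m : Fin n, ∀ y : ℕ, GTD S (x m) = {y} →
      α m = (x m : ℤ) ^ a - (y : ℤ) ^ a) ∧
    (∀ m : Fin n, ∀ y1 y2 : ℕ, y1 ≠ y2 → GTD S (x m) = {y1, y2} →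
      α m = (x m : ℤ) ^ a - (y1 : ℤ) ^ a - (y2 : ℤ) ^ a + (Nat.gcd y1 y2 : ℤ) ^ a) := by
  have hα' : ∀ k, α k =
      ∑ d ∈ (x k).divisors.filter (fun d => ∀ t, x t < x k → ¬ d ∣ x t), Fconv a d := hα
  have key := moebius_sum a
  have hxS : ∀ i, x i ∈ S := by
    intro i; rw [hS]; exact Finset.mem_image_of_mem x (Finset.mem_univ i)
  have hSx : ∀ s ∈ S, ∃ i, x i = s := by
    intro s hs; rw [hS] at hs; simpa using hs
  have hSpos : ∀ s ∈ S, 0 < s := by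
    intro s hs; obtain ⟨i, rfl⟩ := hSx s hs; exact hpos i
  have hGTDmem : ∀ m : Fin n, ∀ y ∈ GTD S (x m), y ∈ S ∧ y < x m ∧ y ∣ x m := by
    intro m y hy
    rw [GTD, Finset.mem_filter] at hy
    exact ⟨hy.1, hy.2.1, hy.2.2.1⟩
  have hfilter : ∀ m : Fin n, ∀ d, d ∣ x m →
      ((∀ t, x t < x m → ¬ d ∣ x t) ↔ ∀ y ∈ GTD S (x m), ¬ d ∣ y) := by
    intro m d hdm
    constructor
    · intro h y hy hdy
      obtain ⟨hyS, hylt, _⟩ := hGTDmem m y hy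
      obtain ⟨t, rfl⟩ := hSx y hyS
      exact h t hylt hdy
    · intro h t ht hdt
      have hg : Nat.gcd (x t) (x m) ∈ S := hgcd _ (hxS t) _ (hxS m)
      have hglt : Nat.gcd (x t) (x m) < x m :=
        lt_of_le_of_lt (Nat.le_of_dvd (hpos t) (Nat.gcd_dvd_left _ _)) ht
      obtain ⟨y, hy, hgy⟩ := exists_gtd S (x m) _ hg (Nat.gcd_dvd_right _ _) hglt
      exact h y hy ((Nat.dvd_gcd hdt hdm).trans hgy)
  have hsub : ∀ m : Fin n, ∀ M : ℕ, M ∣ x m → 0 < M →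
      ∑ d ∈ (x m).divisors, (if d ∣ M then Fconv a d else 0) = (M : ℤ) ^ a := by
    intro m M hM hM0
    rw [← Finset.sum_filter, Nat.divisors_filter_dvd_of_dvd (hpos m).ne' hM]
    exact key M hM0
  refine ⟨?_, ?_, ?_⟩
  · rw [hα', Finset.filter_true_of_mem ?_]
    · exact key _ (hpos _)
    · intro d _ t ht
      exact absurd ht (not_lt.2 (hmono.monotone (by simp [Fin.le_def])))
  · intro m y hGTD
    have hy : y ∈ GTD S (x m) := by rw [hGTD]; exact Finset.mem_singleton_self y
    obtain ⟨hyS, hylt, hydvd⟩ := hGTDmem m y hy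
    rw [hα']
    have hfe : (x m).divisors.filter (fun d => ∀ t, x t < x m → ¬ d ∣ x t)
        = (x m).divisors.filter (fun d => ¬ d ∣ y) := by
      refine Finset.filter_congr fun d hd => ?_
      rw [hfilter m d (Nat.mem_divisors.1 hd).1, hGTD]
      simp
    rw [hfe, Finset.sum_filter]
    have hpt : ∀ d ∈ (x m).divisors,
        (if ¬ d ∣ y then Fconv a d else 0)
          = Fconv a d - (if d ∣ y then Fconv a d else 0) := by
      intro d _
      by_cases h : d ∣ y <;> simp [h]
    rw [Finset.sum_congr rfl hpt, Finset.sum_sub_distrib,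
      hsub m y hydvd (hSpos y hyS), key _ (hpos m)]
  · intro m y1 y2 hne hGTD
    have hy1 : y1 ∈ GTD S (x m) := by rw [hGTD]; simp
    have hy2 : y2 ∈ GTD S (x m) := by rw [hGTD]; simp
    obtain ⟨h1S, h1lt, h1dvd⟩ := hGTDmem m y1 hy1
    obtain ⟨h2S, h2lt, h2dvd⟩ := hGTDmem m y2 hy2
    have hgdvd : Nat.gcd y1 y2 ∣ x m := (Nat.gcd_dvd_left _ _).trans h1dvd
    have hgpos : 0 < Nat.gcd y1 y2 := Nat.gcd_pos_of_pos_left _ (hSpos y1 h1S)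
    rw [hα']
    have hfe : (x m).divisors.filter (fun d => ∀ t, x t < x m → ¬ d ∣ x t)
        = (x m).divisors.filter (fun d => ¬ d ∣ y1 ∧ ¬ d ∣ y2) := by
      refine Finset.filter_congr fun d hd => ?_
      rw [hfilter m d (Nat.mem_divisors.1 hd).1, hGTD]
      simp
    rw [hfe, Finset.sum_filter]
    have hpt : ∀ d ∈ (x m).divisors,
        (if ¬ d ∣ y1 ∧ ¬ d ∣ y2 then Fconv a d else 0)
          = Fconv a d - (if d ∣ y1 then Fconv a d else 0)
            - (if d ∣ y2 then Fconv a d else 0)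
            + (if d ∣ Nat.gcd y1 y2 then Fconv a d else 0) := by
      intro d _
      have : d ∣ Nat.gcd y1 y2 ↔ d ∣ y1 ∧ d ∣ y2 := Nat.dvd_gcd_iff
      by_cases h1 : d ∣ y1 <;> by_cases h2 : d ∣ y2 <;> simp [h1, h2, this]
    rw [Finset.sum_congr rfl hpt, Finset.sum_add_distrib, Finset.sum_sub_distrib,
      Finset.sum_sub_distrib, hsub m y1 h1dvd (hSpos y1 h1S),
      hsub m y2 h2dvd (hSpos y2 h2S), hsub m _ hgdvd hgpos, key _ (hpos m)]
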